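/- Let f ∈ ℝ and c > 0, and define G_c(z,w) := c²·(2f·z₁² + w₁²) + (z₁w₂ − z₂w₁)². Then: (i) G_c(z(t), z'(t)) is constant along every solution of the Hooke equation z'' = −2f·z; (ii) for every a > c and every point z on the ellipse {z₁²/a² + z₂²/(a²−c²) = 1}, the elastic reflection w' of any w ∈ ℝ² at this ellipse at z (with normal n = (z₁/a², z₂/(a²−c²))) satisfies G_c(z,w') = G_c(z,w); (iii) for every b with 0 < b < c and every point z on the hyperbola {z₁²/b² − z₂²/(c²−b²) = 1}, the elastic reflection w' of any w at this hyperbola at z (with normal n = (z₁/b², −z₂/(c²−b²))) satisfies G_c(z,w') = G_c(z,w). Hence G_c is a common first integral of the Hooke billiards whose walls are any combination of these confocal centered ellipses and hyperbolae (all with foci (±c,0)). -/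

import Mathlib

/-- The first integral `G_c(z,w) = c²·(2f·z₁² + w₁²) + (z₁w₂ − z₂w₁)²` of Hooke billiards. -/
def hookeGc (f c : ℝ) (z w : ℝ × ℝ) : ℝ :=
  c ^ 2 * (2 * f * z.1 ^ 2 + w.1 ^ 2) + (z.1 * w.2 - z.2 * w.1) ^ 2

/-- Key algebraic lemma: elastic reflection at a confocal conic `z₁²/A + z₂²/B = 1`
(with `A - B = c²`) preserves `(A-B)·w₁² + (z₁w₂ - z₂w₁)²`. -/
lemma hooke_reflect (A B z1 z2 w1 w2 n1 n2 s : ℝ) (hA : A ≠ 0) (hB : B ≠ 0)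
    (hz : z1 ^ 2 * B + z2 ^ 2 * A = A * B)
    (hn1 : n1 * A = z1) (hn2 : n2 * B = z2)
    (hs : s = 2 * ((w1 * n1 + w2 * n2) / (n1 ^ 2 + n2 ^ 2))) :
    (A - B) * (w1 - s * n1) ^ 2 + (z1 * (w2 - s * n2) - z2 * (w1 - s * n1)) ^ 2
      = (A - B) * w1 ^ 2 + (z1 * w2 - z2 * w1) ^ 2 := by
  have hD : n1 ^ 2 + n2 ^ 2 ≠ 0 := by
    intro h
    have h1 : n1 = 0 := by nlinarith [sq_nonneg n1, sq_nonneg n2]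
    have h2 : n2 = 0 := by nlinarith [sq_nonneg n1, sq_nonneg n2]
    have hz1 : z1 = 0 := by rw [← hn1, h1]; ring
    have hz2 : z2 = 0 := by rw [← hn2, h2]; ring
    rw [hz1, hz2] at hz
    have : A * B = 0 := by linarith [hz]
    rcases mul_eq_zero.mp this with h | h
    · exact hA h
    · exact hB h
  have hsD : s * (n1 ^ 2 + n2 ^ 2) = 2 * (w1 * n1 + w2 * n2) := by
    rw [hs]; field_simp
  have key : (w1 * n1 + w2 * n2) * ((A - B) * n1 ^ 2 + (z1 * n2 - z2 * n1) ^ 2)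
      = (n1 ^ 2 + n2 ^ 2) *
        ((A - B) * w1 * n1 + (z1 * w2 - z2 * w1) * (z1 * n2 - z2 * n1)) := by
    have e1 : n1 = z1 / A := by rw [eq_div_iff hA]; exact hn1
    have e2 : n2 = z2 / B := by rw [eq_div_iff hB]; exact hn2
    rw [e1, e2]
    field_simp
    linear_combination (z1 * (A - B) * z2 * (w1 * z2 * A - w2 * z1 * B)) * hz
  have h2 : (n1 ^ 2 + n2 ^ 2) *
      (s * ((A - B) * n1 ^ 2 + (z1 * n2 - z2 * n1) ^ 2)
        - 2 * ((A - B) * w1 * n1 + (z1 * w2 - z2 * w1) * (z1 * n2 - z2 * n1))) = 0 := by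
    linear_combination ((A - B) * n1 ^ 2 + (z1 * n2 - z2 * n1) ^ 2) * hsD + 2 * key
  have h3 : s * ((A - B) * n1 ^ 2 + (z1 * n2 - z2 * n1) ^ 2)
      - 2 * ((A - B) * w1 * n1 + (z1 * w2 - z2 * w1) * (z1 * n2 - z2 * n1)) = 0 := by
    rcases mul_eq_zero.mp h2 with h | h
    · exact absurd h hD
    · exact h
  linear_combination s * h3

/-- `G_c` is a common first integral of Hooke billiards whose walls are any combination
of confocal centered ellipses `z₁²/a² + z₂²/(a²−c²) = 1` (a > c) and hyperbolae
`z₁²/b² − z₂²/(c²−b²) = 1` (0 < b < c), all with foci `(±c, 0)`. -/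
theorem stmt_5 (f c : ℝ) (hc : 0 < c) :
    (∀ I : Set ℝ, Convex ℝ I → ∀ z v : ℝ → ℝ × ℝ,
      (∀ t ∈ I, HasDerivWithinAt z (v t) I t) →
      (∀ t ∈ I, HasDerivWithinAt v ((-(2 * f)) • z t) I t) →
      ∀ t ∈ I, ∀ t' ∈ I,
        hookeGc f c (z t) (v t) = hookeGc f c (z t') (v t')) ∧
    (∀ a : ℝ, c < a → ∀ z w : ℝ × ℝ,
      z.1 ^ 2 / a ^ 2 + z.2 ^ 2 / (a ^ 2 - c ^ 2) = 1 →
      ∀ n w' : ℝ × ℝ, n = (z.1 / a ^ 2, z.2 / (a ^ 2 - c ^ 2)) →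
      w' = w - (2 * ((w.1 * n.1 + w.2 * n.2) / (n.1 ^ 2 + n.2 ^ 2))) • n →
      hookeGc f c z w' = hookeGc f c z w) ∧
    (∀ b : ℝ, 0 < b → b < c → ∀ z w : ℝ × ℝ,
      z.1 ^ 2 / b ^ 2 - z.2 ^ 2 / (c ^ 2 - b ^ 2) = 1 →
      ∀ n w' : ℝ × ℝ, n = (z.1 / b ^ 2, -z.2 / (c ^ 2 - b ^ 2)) →
      w' = w - (2 * ((w.1 * n.1 + w.2 * n.2) / (n.1 ^ 2 + n.2 ^ 2))) • n →
      hookeGc f c z w' = hookeGc f c z w) := by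
  refine ⟨?_, ?_, ?_⟩
  · -- (i) first integral along the flow
    intro I hI z v hz hv t ht t' ht'
    have hg : ∀ s ∈ I, HasDerivWithinAt (fun τ => hookeGc f c (z τ) (v τ)) 0 I s := by
      intro s hs
      have hz1 : HasDerivWithinAt (fun τ => (z τ).1) (v s).1 I s := by
        simpa using ((hz s hs).hasFDerivWithinAt.fst).hasDerivWithinAt
      have hz2 : HasDerivWithinAt (fun τ => (z τ).2) (v s).2 I s := by
        simpa using ((hz s hs).hasFDerivWithinAt.snd).hasDerivWithinAt
      have hv1 : HasDerivWithinAt (fun τ => (v τ).1) (-(2 * f) * (z s).1) I s := by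
        simpa using ((hv s hs).hasFDerivWithinAt.fst).hasDerivWithinAt
      have hv2 : HasDerivWithinAt (fun τ => (v τ).2) (-(2 * f) * (z s).2) I s := by
        simpa using ((hv s hs).hasFDerivWithinAt.snd).hasDerivWithinAt
      have hbig := (((hz1.pow 2).const_mul (2 * f)).add (hv1.pow 2)).const_mul (c ^ 2) |>.add
        (((hz1.mul hv2).sub (hz2.mul hv1)).pow 2)
      simp only [hookeGc]
      exact hbig.congr_deriv (by simp only [Pi.mul_apply, Pi.sub_apply]; push_cast; ring)
    have hb := hI.norm_image_sub_le_of_norm_hasDerivWithin_le hg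
      (C := 0) (fun x hx => by simp) ht' ht
    have : ‖hookeGc f c (z t) (v t) - hookeGc f c (z t') (v t')‖ ≤ 0 := by
      simpa using hb
    have := norm_le_zero_iff.mp this
    linarith [sub_eq_zero.mp this]
  · -- (ii) ellipse
    intro a ha z w hell n w' hn hw'
    have hA : (a : ℝ) ^ 2 ≠ 0 := pow_ne_zero 2 (lt_trans hc ha).ne'
    have hB : a ^ 2 - c ^ 2 ≠ 0 := by nlinarith
    have hz : z.1 ^ 2 * (a ^ 2 - c ^ 2) + z.2 ^ 2 * a ^ 2 = a ^ 2 * (a ^ 2 - c ^ 2) := by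
      rw [div_add_div _ _ hA hB, div_eq_one_iff_eq (mul_ne_zero hA hB)] at hell
      linear_combination hell
    have hn1 : n.1 * a ^ 2 = z.1 := by rw [hn]; exact div_mul_cancel₀ _ hA
    have hn2 : n.2 * (a ^ 2 - c ^ 2) = z.2 := by rw [hn]; field_simp
    have main := hooke_reflect (a ^ 2) (a ^ 2 - c ^ 2) z.1 z.2 w.1 w.2 n.1 n.2
      (2 * ((w.1 * n.1 + w.2 * n.2) / (n.1 ^ 2 + n.2 ^ 2))) hA hB hz hn1 hn2 rfl
    rw [hw']
    simp only [hookeGc, Prod.fst_sub, Prod.snd_sub, Prod.smul_fst, Prod.smul_snd, smul_eq_mul]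
    linear_combination main
  · -- (iii) hyperbola
    intro b hb hbc z w hyp n w' hn hw'
    have hA : (b : ℝ) ^ 2 ≠ 0 := pow_ne_zero 2 hb.ne'
    have hB : b ^ 2 - c ^ 2 ≠ 0 := by nlinarith
    have hB' : c ^ 2 - b ^ 2 ≠ 0 := by nlinarith
    have hz : z.1 ^ 2 * (b ^ 2 - c ^ 2) + z.2 ^ 2 * b ^ 2 = b ^ 2 * (b ^ 2 - c ^ 2) := by
      field_simp at hyp
      linear_combination -hyp
    have hn1 : n.1 * b ^ 2 = z.1 := by rw [hn]; field_simp
    have hn2 : n.2 * (b ^ 2 - c ^ 2) = z.2 := by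
      rw [hn]
      field_simp
      ring
    have main := hooke_reflect (b ^ 2) (b ^ 2 - c ^ 2) z.1 z.2 w.1 w.2 n.1 n.2
      (2 * ((w.1 * n.1 + w.2 * n.2) / (n.1 ^ 2 + n.2 ^ 2))) hA hB hz hn1 hn2 rfl
    rw [hw']
    simp only [hookeGc, Prod.fst_sub, Prod.snd_sub, Prod.smul_fst, Prod.smul_snd, smul_eq_mul]
    linear_combination main
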